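/- Let Y be a subspace of X and suppose Y_{lcs}^# is a linear subspace of X*. Then any two elements f₁, f₂ ∈ Y_{lcs}^# with f₁|_Y = f₂|_Y are equal; in particular, for every f ∈ Y* and every μ ∈ 𝒫 there is at most one f̃ ∈ Y^#_μ with f̃|_Y = f. -/
import Mathlib


open scoped ENNReal

noncomputable section

/-- `χ_ρ(g) = sup { |g v| : ρ v ≤ 1 } ∈ [0,∞]`. -/
def chi {V : Type*} [AddCommGroup V] [Module ℝ V] [TopologicalSpace V]
    (ρ : V → ℝ) (g : V →L[ℝ] ℝ) : ℝ≥0∞ :=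
  ⨆ v ∈ {v : V | ρ v ≤ 1}, ENNReal.ofReal |g v|

/-- `χ_ρ^W(f)` for a functional `f` on a subspace `W`. -/
def chiSub {V : Type*} [AddCommGroup V] [Module ℝ V] [TopologicalSpace V]
    (W : Submodule ℝ V) (ρ : V → ℝ) (f : W →L[ℝ] ℝ) : ℝ≥0∞ :=
  chi (fun w : W => ρ (w : V)) f

/-- `Y^#_μ = {f ∈ X* : χ_ρ^X(f) = χ_ρ^Y(f|_Y) < ∞ for all ρ ∈ 𝒫_μ}`. -/
def sharpMu {X : Type*} [AddCommGroup X] [Module ℝ X] [TopologicalSpace X]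
    {ι : Type*} (p : SeminormFamily ℝ X ι) (Y : Submodule ℝ X) (i : ι) :
    Set (X →L[ℝ] ℝ) :=
  {f | ∀ j, p i ≤ p j →
    chi (⇑(p j)) f = chiSub Y (⇑(p j)) (f.comp Y.subtypeL) ∧ chi (⇑(p j)) f < ⊤}

/-- `Y_{lcs}^# = ⋃_{μ ∈ 𝒫} Y^#_μ`. -/
def sharpLcs {X : Type*} [AddCommGroup X] [Module ℝ X] [TopologicalSpace X]
    {ι : Type*} (p : SeminormFamily ℝ X ι) (Y : Submodule ℝ X) :
    Set (X →L[ℝ] ℝ) :=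
  ⋃ i, sharpMu p Y i

lemma chi_zero {V : Type*} [AddCommGroup V] [Module ℝ V] [TopologicalSpace V]
    (ρ : V → ℝ) : chi ρ (0 : V →L[ℝ] ℝ) = 0 := by
  simp [chi]

lemma eq_zero_of_chi_eq_zero {X : Type*} [AddCommGroup X] [Module ℝ X] [TopologicalSpace X]
    (q : Seminorm ℝ X) (g : X →L[ℝ] ℝ) (h : chi (⇑q) g = 0) : g = 0 := by
  have hball : ∀ v : X, q v ≤ 1 → g v = 0 := by
    intro v hv
    have hle : ENNReal.ofReal |g v| ≤ chi (⇑q) g := by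
      apply le_iSup₂ (f := fun (v : X) (_ : v ∈ {v : X | q v ≤ 1}) => ENNReal.ofReal |g v|) v hv
    rw [h, nonpos_iff_eq_zero, ENNReal.ofReal_eq_zero] at hle
    exact abs_eq_zero.mp (le_antisymm hle (abs_nonneg _))
  ext x
  have hc : (0:ℝ) < q x + 1 := by positivity
  have hv : q ((q x + 1)⁻¹ • x) ≤ 1 := by
    rw [map_smul_eq_mul]
    rw [Real.norm_eq_abs, abs_of_pos (by positivity)]
    rw [inv_mul_le_iff₀ hc]
    linarith
  have := hball _ hv
  rw [map_smul, smul_eq_mul] at this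
  have := mul_eq_zero.mp this
  rcases this with h1 | h2
  · exact absurd h1 (by positivity)
  · simpa using h2

theorem statement13 {X : Type*} [AddCommGroup X] [Module ℝ X] [TopologicalSpace X]
    {ι : Type*} [Nonempty ι] (p : SeminormFamily ℝ X ι) (hp : WithSeminorms p)
    (hdir : Directed (· ≤ ·) p) (Y : Submodule ℝ X)
    (hlin : ∃ S : Submodule ℝ (X →L[ℝ] ℝ), (S : Set (X →L[ℝ] ℝ)) = sharpLcs p Y) :
    (∀ f₁ ∈ sharpLcs p Y, ∀ f₂ ∈ sharpLcs p Y,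
      f₁.comp Y.subtypeL = f₂.comp Y.subtypeL → f₁ = f₂) ∧
    (∀ (f : Y →L[ℝ] ℝ) (i : ι), ∀ g₁ ∈ sharpMu p Y i, ∀ g₂ ∈ sharpMu p Y i,
      g₁.comp Y.subtypeL = f → g₂.comp Y.subtypeL = f → g₁ = g₂) := by
  obtain ⟨S, hS⟩ := hlin
  have main : ∀ f₁ ∈ sharpLcs p Y, ∀ f₂ ∈ sharpLcs p Y,
      f₁.comp Y.subtypeL = f₂.comp Y.subtypeL → f₁ = f₂ := by
    intro f₁ h₁ f₂ h₂ hres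
    have hS₁ : f₁ ∈ S := by rw [← SetLike.mem_coe, hS]; exact h₁
    have hS₂ : f₂ ∈ S := by rw [← SetLike.mem_coe, hS]; exact h₂
    have hsub : f₁ - f₂ ∈ sharpLcs p Y := by
      rw [← hS]; exact S.sub_mem hS₁ hS₂
    obtain ⟨_, ⟨i, rfl⟩, hmem⟩ := hsub
    have hkey := (hmem i le_rfl).1
    have hrest0 : (f₁ - f₂).comp Y.subtypeL = 0 := by
      ext y; simp only [ContinuousLinearMap.sub_comp, ContinuousLinearMap.sub_apply,
        ContinuousLinearMap.zero_apply, sub_eq_zero]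
      exact congrFun (congrArg (fun (h : Y →L[ℝ] ℝ) => (h : Y → ℝ)) hres) y
    rw [hrest0] at hkey
    have hz : chi (⇑(p i)) (f₁ - f₂) = 0 := by
      rw [hkey]; exact chi_zero _
    have := eq_zero_of_chi_eq_zero (p i) (f₁ - f₂) hz
    exact sub_eq_zero.mp this
  refine ⟨main, ?_⟩
  intro f i g₁ hg₁ g₂ hg₂ h₁ h₂
  exact main g₁ (Set.mem_iUnion.mpr ⟨i, hg₁⟩) g₂ (Set.mem_iUnion.mpr ⟨i, hg₂⟩) (h₁.trans h₂.symm)
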